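/- Let r ≥ 5 and 1 ≤ s ≤ r−1 be integers, and let G be a vertex-transitive group of automorphisms of S(PX(2,r,s)). Then G contains an element g such that the cyclic group generated by g is semiregular on the vertices of S(PX(2,r,s)) and the order of g is at least r (indeed equal to r or 2r). -/

import Mathlib

namespace Stmt5

abbrev SPXV (r s : ℕ) : Type := (Fin s → ZMod 2) × ZMod r × Bool

def spxRel (r s : ℕ) (a b : SPXV r s) : Prop :=
  a.2.2 = true ∧ b.2.2 = false ∧
    ((b.2.1 = a.2.1 + 1 ∧ ∀ (i : ℕ) (h : i + 1 < s),
        b.1 ⟨i, by omega⟩ = a.1 ⟨i + 1, h⟩) ∨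
     (b.2.1 = a.2.1 ∧ b.1 = a.1))

def SPX (r s : ℕ) : SimpleGraph (SPXV r s) := SimpleGraph.fromRel (spxRel r s)

section Dev

variable {r s : ℕ}

/-- shift compatibility -/
def shOK (s : ℕ) (n m : Fin s → ZMod 2) : Prop :=
  ∀ (i : ℕ) (h : i + 1 < s), m ⟨i, Nat.lt_of_succ_lt h⟩ = n ⟨i + 1, h⟩

lemma spxRel_iff (a b : SPXV r s) :
    spxRel r s a b ↔ a.2.2 = true ∧ b.2.2 = false ∧
      ((b.2.1 = a.2.1 + 1 ∧ shOK s a.1 b.1) ∨ (b.2.1 = a.2.1 ∧ b.1 = a.1)) := Iff.rfl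

lemma adj_iff (a b : SPXV r s) :
    (SPX r s).Adj a b ↔ spxRel r s a b ∨ spxRel r s b a := by
  rw [SPX, SimpleGraph.fromRel_adj]
  constructor
  · rintro ⟨-, h⟩; exact h
  · intro h
    refine ⟨?_, h⟩
    rcases h with ⟨h1, h2, -⟩ | ⟨h1, h2, -⟩ <;>
      · intro e
        subst e
        rw [h1] at h2
        simp at h2

lemma one_ne_zero_zmod (hr : 5 ≤ r) : (1 : ZMod r) ≠ 0 := by
  haveI : NeZero r := ⟨by omega⟩
  intro h
  have h2 := (ZMod.natCast_eq_zero_iff 1 r).mp (by exact_mod_cast h)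
  have := Nat.le_of_dvd one_pos h2
  omega

lemma two_ne_zero_zmod (hr : 5 ≤ r) : (2 : ZMod r) ≠ 0 := by
  haveI : NeZero r := ⟨by omega⟩
  intro h
  have h2 := (ZMod.natCast_eq_zero_iff 2 r).mp (by exact_mod_cast h)
  have := Nat.le_of_dvd (by norm_num) h2
  omega

/-- signs of adjacent vertices differ -/
lemma adj_sign {a b : SPXV r s} (h : (SPX r s).Adj a b) : a.2.2 ≠ b.2.2 := by
  rcases (adj_iff a b).mp h with ⟨h1, h2, -⟩ | ⟨h1, h2, -⟩ <;> rw [h1, h2] <;> simp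

/-- full case analysis for an edge whose first endpoint is `+` -/
lemma adj_plus {a b : SPXV r s} (h : (SPX r s).Adj a b) (ha : a.2.2 = true) :
    b.2.2 = false ∧
      ((b.2.1 = a.2.1 + 1 ∧ shOK s a.1 b.1) ∨ (b.2.1 = a.2.1 ∧ b.1 = a.1)) := by
  rcases (adj_iff a b).mp h with hrel | hrel
  · exact ⟨hrel.2.1, hrel.2.2⟩
  · exfalso; rw [spxRel_iff] at hrel; rw [ha] at hrel; simp at hrel

lemma adj_vert (n : Fin s → ZMod 2) (x : ZMod r) :
    (SPX r s).Adj (n, x, true) (n, x, false) := by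
  rw [adj_iff]
  exact Or.inl ⟨rfl, rfl, Or.inr ⟨rfl, rfl⟩⟩

lemma adj_hor {n m : Fin s → ZMod 2} (h : shOK s n m) (x : ZMod r) :
    (SPX r s).Adj (n, x, true) (m, x + 1, false) := by
  rw [adj_iff]
  exact Or.inl ⟨rfl, rfl, Or.inl ⟨rfl, h⟩⟩

lemma reach_shift {n m : Fin s → ZMod 2} (h : shOK s n m) (x : ZMod r) :
    (SPX r s).Reachable (n, x, true) (m, x + 1, true) :=
  ((adj_hor h x).reachable).trans ((adj_vert m (x + 1)).symm.reachable)

lemma reach_k (k : ℕ) :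
    ∀ (n : Fin s → ZMod 2) (x : ZMod r) (m : Fin s → ZMod 2),
      (∀ (i : Fin s) (h : i.val + k < s), m i = n ⟨i.val + k, h⟩) →
      (SPX r s).Reachable (n, x, true) (m, x + (k : ℕ), true) := by
  induction k with
  | zero =>
    intro n x m hm
    have hmn : m = n := by
      funext i
      have hi : (⟨i.val + 0, by omega⟩ : Fin s) = i := Fin.ext (by simp)
      rw [hm i (by omega), hi]
    subst hmn
    simpa using SimpleGraph.Reachable.refl _
  | succ k ih =>
    intro n x m hm
    set n1 : Fin s → ZMod 2 := fun i =>
      if h : i.val + 1 < s then n ⟨i.val + 1, h⟩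
      else if h2 : k < s then m ⟨s - 1 - k, by omega⟩ else 0 with hn1
    have hsh : shOK s n n1 := by
      intro i h
      simp only [hn1]
      rw [dif_pos (show (⟨i, Nat.lt_of_succ_lt h⟩ : Fin s).val + 1 < s from h)]
    have hcond : ∀ (i : Fin s) (h : i.val + k < s), m i = n1 ⟨i.val + k, h⟩ := by
      intro i h
      simp only [hn1]
      by_cases hc : i.val + k + 1 < s
      · rw [dif_pos (show (⟨i.val + k, h⟩ : Fin s).val + 1 < s from hc)]
        have hi : (⟨(⟨i.val + k, h⟩ : Fin s).val + 1, hc⟩ : Fin s) = ⟨i.val + (k+1), by omega⟩ :=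
          Fin.ext (by simp; omega)
        rw [hm i (by omega), hi]
      · rw [dif_neg (show ¬((⟨i.val + k, h⟩ : Fin s).val + 1 < s) from hc)]
        have hk : k < s := by omega
        rw [dif_pos hk]
        have hi : (⟨s - 1 - k, by omega⟩ : Fin s) = i := Fin.ext (by simp; omega)
        rw [hi]
    have h1 := reach_shift hsh x
    have h2 := ih n1 (x + 1) m hcond
    have : x + 1 + (k : ℕ) = x + ((k + 1 : ℕ) : ZMod r) := by push_cast; ring
    rw [this] at h2
    exact h1.trans h2

lemma preconnected (hr : 5 ≤ r) : (SPX r s).Preconnected := by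
  haveI : NeZero r := ⟨by omega⟩
  have base : ∀ (n : Fin s → ZMod 2) (x : ZMod r) (m : Fin s → ZMod 2) (y : ZMod r),
      (SPX r s).Reachable (n, x, true) (m, y, true) := by
    intro n x m y
    have h := reach_k (s + (y - x - (s : ℕ)).val) n x m (by intro i h; omega)
    have hxy : x + ((s + (y - x - (s : ℕ)).val : ℕ) : ZMod r) = y := by
      push_cast
      rw [ZMod.natCast_val, ZMod.cast_id]
      ring
    rwa [hxy] at h
  intro u v
  obtain ⟨n, x, ε⟩ := u
  obtain ⟨m, y, δ⟩ := v
  have hu : (SPX r s).Reachable (n, x, ε) (n, x, true) := by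
    cases ε
    · exact ((adj_vert n x).symm.reachable)
    · rfl
  have hv : (SPX r s).Reachable (m, y, true) (m, y, δ) := by
    cases δ
    · exact ((adj_vert m y).reachable)
    · rfl
  exact (hu.trans (base n x m y)).trans hv

lemma const_of_adj (hr : 5 ≤ r) {α : Type*} (f : SPXV r s → α)
    (hf : ∀ a b, (SPX r s).Adj a b → f a = f b) (u v : SPXV r s) : f u = f v := by
  obtain ⟨p⟩ := preconnected hr u v
  induction p with
  | nil => rfl
  | cons h p ih => exact (hf _ _ h).trans ih


/-! ### automorphisms -/

def IsAut (g : Equiv.Perm (SPXV r s)) : Prop :=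
  ∀ u v, (SPX r s).Adj (g u) (g v) ↔ (SPX r s).Adj u v

def onFour (a b : SPXV r s) : Prop :=
  ∃ a' b', a' ≠ a ∧ b' ≠ b ∧ (SPX r s).Adj b a' ∧ (SPX r s).Adj a' b' ∧ (SPX r s).Adj b' a

lemma onFour_symm {a b : SPXV r s} (h : onFour a b) : onFour b a := by
  obtain ⟨a', b', h1, h2, h3, h4, h5⟩ := h
  exact ⟨b', a', h2, h1, h5.symm, h4.symm, h3.symm⟩

def flip (k : Fin s) (n : Fin s → ZMod 2) : Fin s → ZMod 2 :=
  fun i => if i = k then n i + 1 else n i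

lemma flip_ne (k : Fin s) (n : Fin s → ZMod 2) : flip k n ≠ n := by
  intro h
  have := congrFun h k
  simp [flip] at this

lemma flip_apply_ne {k i : Fin s} (n : Fin s → ZMod 2) (h : i ≠ k) : flip k n i = n i := by
  simp [flip, h]

lemma not_onFour_vert (hr : 5 ≤ r) (n : Fin s → ZMod 2) (x : ZMod r) :
    ¬ onFour ((n, x, true) : SPXV r s) (n, x, false) := by
  rintro ⟨a', b', ha'ne, hb'ne, h1, h2, h3⟩
  -- h1 : Adj (n,x,false) a'
  have ha's : a'.2.2 = true := by
    have := adj_sign h1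
    simp only [ne_eq] at this
    cases h : a'.2.2
    · exact absurd h.symm this
    · rfl
  -- edge a' → (n,x,false)
  have hA := adj_plus h1.symm ha's
  have hx : x = a'.2.1 + 1 := by
    rcases hA.2 with ⟨h4, -⟩ | ⟨h4, h5⟩
    · exact h4
    · exfalso
      apply ha'ne
      have : a' = (a'.1, a'.2.1, a'.2.2) := rfl
      rw [this, ha's, ← h4, ← h5]
  -- b' sign
  have hb's : b'.2.2 = false := by
    have := adj_sign h3
    cases h : b'.2.2
    · rfl
    · exact absurd rfl (by rw [h] at this; exact this)
  -- edge (n,x,true) → b'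
  have hB := adj_plus h3.symm rfl
  -- edge a' → b'
  have hC := adj_plus h2 ha's
  rcases hB.2 with ⟨h4, -⟩ | ⟨h4, h5⟩
  · -- b'.2.1 = x + 1 : impossible
    rcases hC.2 with ⟨h6, -⟩ | ⟨h6, -⟩
    · exact one_ne_zero_zmod hr (by linear_combination h6 - h4 - hx)
    · exact two_ne_zero_zmod hr (by linear_combination h6 - h4 - hx)
  · -- same fiber : b' = b
    apply hb'ne
    have : b' = (b'.1, b'.2.1, b'.2.2) := rfl
    rw [this, hb's, h4, h5]

lemma onFour_hor (hs : 1 ≤ s) {n m : Fin s → ZMod 2} (hsh : shOK s n m) (x : ZMod r) :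
    onFour ((n, x, true) : SPXV r s) (m, x + 1, false) := by
  have h0 : (0 : ℕ) < s := hs
  have hL : s - 1 < s := by omega
  refine ⟨(flip ⟨0, h0⟩ n, x, true), (flip ⟨s - 1, hL⟩ m, x + 1, false), ?_, ?_, ?_, ?_, ?_⟩
  · intro h
    exact flip_ne _ n (congrArg Prod.fst h)
  · intro h
    exact flip_ne _ m (congrArg Prod.fst h)
  · -- Adj (m,x+1,false) (flip0 n, x, true)
    refine ((adj_hor ?_ x).symm : _)
    intro i h
    rw [hsh i h, flip_apply_ne]
    intro hc
    have := congrArg Fin.val hc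
    simp at this
  · -- Adj (flip0 n,x,true) (flipLast m, x+1, false)
    refine adj_hor ?_ x
    intro i h
    rw [flip_apply_ne m (by intro hc; have := congrArg Fin.val hc; simp at this; omega),
      hsh i h, flip_apply_ne]
    intro hc
    have := congrArg Fin.val hc
    simp at this
  · -- Adj (flipLast m, x+1, false) (n, x, true)
    refine ((adj_hor ?_ x).symm : _)
    intro i h
    rw [flip_apply_ne m (by intro hc; have := congrArg Fin.val hc; simp at this; omega),
      hsh i h]

/-- An edge is vertical iff it lies on no 4-cycle. -/
lemma vert_iff_not_onFour (hr : 5 ≤ r) (hs : 1 ≤ s) {a b : SPXV r s}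
    (h : (SPX r s).Adj a b) : a.2.1 = b.2.1 ↔ ¬ onFour a b := by
  -- reduce to the case `a` is `+`
  have main : ∀ (n : Fin s → ZMod 2) (x : ZMod r) (b : SPXV r s),
      (SPX r s).Adj (n, x, true) b → (x = b.2.1 ↔ ¬ onFour ((n, x, true) : SPXV r s) b) := by
    intro n x b hadj
    have hA := adj_plus hadj rfl
    have hb : b = (b.1, b.2.1, false) := by
      rw [← hA.1]
    rcases hA.2 with ⟨h4, h5⟩ | ⟨h4, h5⟩
    · constructor
      · intro he
        exfalso
        rw [h4] at he
        exact one_ne_zero_zmod hr (by linear_combination -he)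
      · intro hno
        exfalso
        apply hno
        rw [hb, h4]
        exact onFour_hor hs h5 x
    · rw [h4]
      simp only [true_iff]
      rw [hb, h4, h5]
      exact not_onFour_vert hr n x
  cases hsa : a.2.2 with
  | true =>
    have ha : a = (a.1, a.2.1, true) := by rw [← hsa]
    rw [ha] at h ⊢
    exact main a.1 a.2.1 b h
  | false =>
    have hsb : b.2.2 = true := by
      have := adj_sign h
      rw [hsa] at this
      cases hc : b.2.2
      · rw [hc] at this; simp at this
      · rfl
    have hb : b = (b.1, b.2.1, true) := by rw [← hsb]
    have h' := h.symm
    rw [hb] at h' ⊢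
    have := main b.1 b.2.1 a h'
    constructor
    · intro he
      intro hof
      exact (this.mp he.symm) (onFour_symm hof)
    · intro hno
      have : b.2.1 = a.2.1 := this.mpr (fun hof => hno (onFour_symm hof))
      exact this.symm

lemma onFour_aut {g : Equiv.Perm (SPXV r s)} (hg : IsAut g) (a b : SPXV r s) :
    onFour (g a) (g b) ↔ onFour a b := by
  constructor
  · rintro ⟨a'', b'', h1, h2, h3, h4, h5⟩
    refine ⟨g.symm a'', g.symm b'', ?_, ?_, ?_, ?_, ?_⟩
    · intro h; apply h1; rw [← h, g.apply_symm_apply]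
    · intro h; apply h2; rw [← h, g.apply_symm_apply]
    · exact (hg b (g.symm a'')).mp (by rw [g.apply_symm_apply]; exact h3)
    · exact (hg (g.symm a'') (g.symm b'')).mp
        (by rw [g.apply_symm_apply, g.apply_symm_apply]; exact h4)
    · exact (hg (g.symm b'') a).mp (by rw [g.apply_symm_apply]; exact h5)
  · rintro ⟨a', b', h1, h2, h3, h4, h5⟩
    exact ⟨g a', g b', fun h => h1 (g.injective h), fun h => h2 (g.injective h),
      (hg b a').mpr h3, (hg a' b').mpr h4, (hg b' a).mpr h5⟩

lemma fiber_pres (hr : 5 ≤ r) (hs : 1 ≤ s) {g : Equiv.Perm (SPXV r s)} (hg : IsAut g)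
    {a b : SPXV r s} (h : (SPX r s).Adj a b) :
    a.2.1 = b.2.1 ↔ (g a).2.1 = (g b).2.1 := by
  rw [vert_iff_not_onFour hr hs h, vert_iff_not_onFour hr hs ((hg a b).mpr h),
    onFour_aut hg]

/-- the vertical-matching partner -/
def M (v : SPXV r s) : SPXV r s := (v.1, v.2.1, !v.2.2)

lemma adj_M (v : SPXV r s) : (SPX r s).Adj v (M v) := by
  obtain ⟨n, x, ε⟩ := v
  cases ε
  · exact (adj_vert n x).symm
  · exact adj_vert n x

lemma M_unique {v w : SPXV r s} (hr : 5 ≤ r) (h : (SPX r s).Adj v w)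
    (hf : v.2.1 = w.2.1) : w = M v := by
  cases hsv : v.2.2 with
  | true =>
    have hA := adj_plus h hsv
    rcases hA.2 with ⟨h4, -⟩ | ⟨h4, h5⟩
    · exfalso
      rw [h4] at hf
      exact one_ne_zero_zmod hr (by linear_combination -hf)
    · show w = (v.1, v.2.1, !v.2.2)
      rw [hsv, Bool.not_true, ← hA.1, ← h4, ← h5]
  | false =>
    have hsw : w.2.2 = true := by
      have := adj_sign h
      rw [hsv] at this
      cases hc : w.2.2
      · rw [hc] at this; simp at this
      · rfl
    have hA := adj_plus h.symm hsw
    rcases hA.2 with ⟨h4, -⟩ | ⟨h4, h5⟩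
    · exfalso
      rw [h4] at hf
      exact one_ne_zero_zmod hr (by linear_combination hf)
    · show w = (v.1, v.2.1, !v.2.2)
      rw [hsv, Bool.not_false, h5, hf, ← hsw]

lemma M_equivariant (hr : 5 ≤ r) (hs : 1 ≤ s) {g : Equiv.Perm (SPXV r s)} (hg : IsAut g)
    (v : SPXV r s) : g (M v) = M (g v) := by
  apply M_unique hr ((hg v (M v)).mpr (adj_M v))
  exact (fiber_pres hr hs hg (adj_M v)).mp rfl

lemma sign_of_adj_true {a b : SPXV r s} (h : (SPX r s).Adj a b) (ha : a.2.2 = true) :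
    b.2.2 = false := (adj_plus h ha).1

lemma sign_of_adj_false {a b : SPXV r s} (h : (SPX r s).Adj a b) (ha : a.2.2 = false) :
    b.2.2 = true := by
  cases hb : b.2.2
  · exact absurd (ha.trans hb.symm) (adj_sign h)
  · rfl

lemma sign_dichotomy (hr : 5 ≤ r) {g : Equiv.Perm (SPXV r s)} (hg : IsAut g) :
    (∀ v, (g v).2.2 = v.2.2) ∨ (∀ v, (g v).2.2 = !v.2.2) := by
  have hinv : ∀ a b, (SPX r s).Adj a b →
      ((g a).2.2 == a.2.2) = ((g b).2.2 == b.2.2) := by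
    intro a b h
    have h1 : b.2.2 = !a.2.2 := by
      cases hx : a.2.2
      · rw [sign_of_adj_false h hx]; rfl
      · rw [sign_of_adj_true h hx]; rfl
    have h2 : (g b).2.2 = !(g a).2.2 := by
      have h' := (hg a b).mpr h
      cases hx : (g a).2.2
      · rw [sign_of_adj_false h' hx]; rfl
      · rw [sign_of_adj_true h' hx]; rfl
    rw [h1, h2]
    cases (g a).2.2 <;> cases a.2.2 <;> rfl
  have hconst : ∀ v, ((g v).2.2 == v.2.2) = ((g ((fun _ => 0, 0, true) : SPXV r s)).2.2 == true) :=
    fun v => const_of_adj hr (fun v => ((g v).2.2 == v.2.2)) hinv v _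
  cases hc : ((g ((fun _ => 0, 0, true) : SPXV r s)).2.2 == true) with
  | true =>
    left
    intro v
    have h := hconst v
    rw [hc] at h
    exact beq_iff_eq.mp h
  | false =>
    right
    intro v
    have h := hconst v
    rw [hc] at h
    have hne := beq_eq_false_iff_ne.mp h
    cases hx : (g v).2.2 <;> cases hy : v.2.2 <;> rw [hx, hy] at hne <;> simp_all

/-- Lemma A : every automorphism acts on the fibers as `x ↦ x + c` (sign-preserving)
or as `x ↦ c - x` (sign-reversing). -/
lemma typeI_or_II (hr : 5 ≤ r) (hs : 1 ≤ s) {g : Equiv.Perm (SPXV r s)} (hg : IsAut g) :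
    (∃ c, ∀ v, (g v).2.1 = v.2.1 + c ∧ (g v).2.2 = v.2.2) ∨
    (∃ c, ∀ v, (g v).2.1 = c - v.2.1 ∧ (g v).2.2 = !v.2.2) := by
  have step : ∀ {a b : SPXV r s}, (SPX r s).Adj a b → a.2.1 ≠ b.2.1 → a.2.2 = true →
      b.2.1 = a.2.1 + 1 := by
    intro a b h hne ha
    rcases (adj_plus h ha).2 with ⟨h4, -⟩ | ⟨h4, -⟩
    · exact h4
    · exact absurd h4.symm hne
  rcases sign_dichotomy hr hg with hsgn | hsgn
  · left
    have hinv : ∀ a b, (SPX r s).Adj a b →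
        (g a).2.1 - a.2.1 = (g b).2.1 - b.2.1 := by
      intro a b h
      have h' := (hg a b).mpr h
      by_cases hfib : a.2.1 = b.2.1
      · rw [(fiber_pres hr hs hg h).mp hfib, hfib]
      · have hfib' : (g a).2.1 ≠ (g b).2.1 := fun hc => hfib ((fiber_pres hr hs hg h).mpr hc)
        cases hsa : a.2.2 with
        | true =>
          have e1 := step h hfib hsa
          have e2 := step h' hfib' ((hsgn a).trans hsa)
          linear_combination e1 - e2
        | false =>
          have e1 := step h.symm (Ne.symm hfib) (sign_of_adj_false h hsa)
          have e2 := step h'.symm (Ne.symm hfib')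
            ((hsgn b).trans (sign_of_adj_false h hsa))
          linear_combination e2 - e1
    refine ⟨(g ((fun _ => 0, 0, true) : SPXV r s)).2.1 - 0, fun v => ⟨?_, hsgn v⟩⟩
    have h := const_of_adj hr (fun v => (g v).2.1 - v.2.1) hinv v ((fun _ => 0, 0, true) : SPXV r s)
    simp only at h
    linear_combination h
  · right
    have hinv : ∀ a b, (SPX r s).Adj a b →
        (g a).2.1 + a.2.1 = (g b).2.1 + b.2.1 := by
      intro a b h
      have h' := (hg a b).mpr h
      by_cases hfib : a.2.1 = b.2.1
      · rw [(fiber_pres hr hs hg h).mp hfib, hfib]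
      · have hfib' : (g a).2.1 ≠ (g b).2.1 := fun hc => hfib ((fiber_pres hr hs hg h).mpr hc)
        cases hsa : a.2.2 with
        | true =>
          have e1 := step h hfib hsa
          have hgb : (g b).2.2 = true := by
            rw [hsgn b, sign_of_adj_true h hsa]; rfl
          have e2 := step h'.symm (Ne.symm hfib') hgb
          linear_combination e2 - e1
        | false =>
          have e1 := step h.symm (Ne.symm hfib) (sign_of_adj_false h hsa)
          have hga : (g a).2.2 = true := by
            rw [hsgn a, hsa]; rfl
          have e2 := step h' hfib' hga
          linear_combination e1 - e2
    refine ⟨(g ((fun _ => 0, 0, true) : SPXV r s)).2.1 + 0, fun v => ⟨?_, hsgn v⟩⟩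
    have h := const_of_adj hr (fun v => (g v).2.1 + v.2.1) hinv v ((fun _ => 0, 0, true) : SPXV r s)
    simp only at h
    linear_combination h

lemma adj_hor_iff (hr : 5 ≤ r) (n m : Fin s → ZMod 2) (x : ZMod r) :
    (SPX r s).Adj (n, x, true) (m, x + 1, false) ↔ shOK s n m := by
  constructor
  · intro h
    rcases (adj_plus h rfl).2 with ⟨-, h5⟩ | ⟨h4, -⟩
    · exact h5
    · exact absurd h4 (fun hc => one_ne_zero_zmod hr (by linear_combination hc))
  · intro h
    exact adj_hor h x

/-- tail shift, padding with 0 -/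
def tailf (s : ℕ) (n : Fin s → ZMod 2) : Fin s → ZMod 2 :=
  fun i => if hh : i.val + 1 < s then n ⟨i.val + 1, hh⟩ else 0

lemma tailf_lt {n : Fin s → ZMod 2} (i : Fin s) (hh : i.val + 1 < s) :
    tailf s n i = n ⟨i.val + 1, hh⟩ := dif_pos hh

lemma tailf_ge {n : Fin s → ZMod 2} (i : Fin s) (hh : ¬ (i.val + 1 < s)) :
    tailf s n i = 0 := dif_neg hh

/-- inverse shift, padding with 0 -/
def untail (s : ℕ) (n : Fin s → ZMod 2) : Fin s → ZMod 2 :=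
  fun i => if h1 : 1 ≤ i.val then n ⟨i.val - 1, by omega⟩ else 0

lemma untail_pos {n : Fin s → ZMod 2} (i : Fin s) (h1 : 1 ≤ i.val) :
    untail s n i = n ⟨i.val - 1, by omega⟩ := dif_pos h1

/-- Lemma W : an automorphism fixing all fibers and signs is a "wreath" element. -/
lemma wreath (hr : 5 ≤ r) (hs : 1 ≤ s) {h : Equiv.Perm (SPXV r s)} (hg : IsAut h)
    (hfix : ∀ v, (h v).2.1 = v.2.1 ∧ (h v).2.2 = v.2.2) :
    ∃ b : ZMod r → ZMod 2, ∀ v : SPXV r s, ∀ i : Fin s,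
      (h v).1 i = v.1 i + b (v.2.1 + (i.val : ZMod r)) := by
  haveI : NeZero r := ⟨by omega⟩
  set ψ : ZMod r → (Fin s → ZMod 2) → (Fin s → ZMod 2) :=
    fun x n => (h (n, x, true)).1 with hψ
  have hform : ∀ n x, h (n, x, true) = (ψ x n, x, true) := by
    intro n x
    rw [show h (n, x, true) =
      ((h (n, x, true)).1, (h (n, x, true)).2.1, (h (n, x, true)).2.2) from rfl,
      (hfix (n, x, true)).1, (hfix (n, x, true)).2]
  have hfalse : ∀ n x, h (n, x, false) = (ψ x n, x, false) := by
    intro n x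
    have hM := M_equivariant hr hs hg ((n, x, true) : SPXV r s)
    have h1 : M ((n, x, true) : SPXV r s) = (n, x, false) := rfl
    rw [h1, hform] at hM
    exact hM
  have key : ∀ (x : ZMod r) (n m : Fin s → ZMod 2),
      shOK s n m ↔ shOK s (ψ x n) (ψ (x + 1) m) := by
    intro x n m
    rw [← adj_hor_iff hr n m x, ← adj_hor_iff hr (ψ x n) (ψ (x + 1) m) x,
      ← hform n x, ← hfalse m (x + 1)]
    exact (hg _ _).symm
  have star : ∀ (x : ZMod r) (n m : Fin s → ZMod 2), shOK s n m →
      ∀ (i : ℕ) (hi : i + 1 < s),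
        ψ (x + 1) m ⟨i, Nat.lt_of_succ_lt hi⟩ = ψ x n ⟨i + 1, hi⟩ :=
    fun x n m hsh => (key x n m).mp hsh
  have shOK_tail : ∀ n : Fin s → ZMod 2, shOK s n (tailf s n) := by
    intro n i hi
    rw [tailf_lt _ (show ((⟨i, Nat.lt_of_succ_lt hi⟩ : Fin s)).val + 1 < s from hi)]
  have shOK_untail : ∀ n : Fin s → ZMod 2, shOK s (untail s n) n := by
    intro n i hi
    rw [untail_pos (⟨i + 1, hi⟩ : Fin s) (by exact Nat.le_add_left 1 i)]
    exact (congrArg n (Fin.ext (by simp))).symm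
  have Dep : ∀ (j : ℕ) (x : ZMod r) (n n' : Fin s → ZMod 2),
      (∀ i : Fin s, j ≤ i.val → n i = n' i) → ∀ (hj : j < s),
      ψ x n ⟨j, hj⟩ = ψ x n' ⟨j, hj⟩ := by
    intro j
    induction j with
    | zero =>
      intro x n n' hag hj
      have : n = n' := funext fun i => hag i (Nat.zero_le _)
      rw [this]
    | succ j ih =>
      intro x n n' hag hj
      have hjs : j < s := Nat.lt_of_succ_lt hj
      have e1 := (star x n _ (shOK_tail n) j hj).symm
      have e2 := (star x n' _ (shOK_tail n') j hj).symm
      rw [e1, e2]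
      refine ih (x + 1) _ _ ?_ hjs
      intro i hji
      by_cases hc : i.val + 1 < s
      · rw [tailf_lt i hc, tailf_lt i hc]
        exact hag ⟨i.val + 1, hc⟩ (Nat.succ_le_succ hji)
      · rw [tailf_ge i hc, tailf_ge i hc]
  set ρ : ZMod r → ZMod 2 → ZMod 2 :=
    fun y t => ψ (y - ((s - 1 : ℕ) : ZMod r)) (fun _ => t) ⟨s - 1, by omega⟩ with hρ
  have Elem : ∀ (d j : ℕ) (hj : j < s), j = s - 1 - d → ∀ (x : ZMod r) (n : Fin s → ZMod 2),
      ψ x n ⟨j, hj⟩ = ρ (x + (j : ZMod r)) (n ⟨j, hj⟩) := by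
    intro d
    induction d with
    | zero =>
      intro j hj hd x n
      have hd' : j = s - 1 := by omega
      subst hd'
      have h1 : ψ x n ⟨s - 1, hj⟩ = ψ x (fun _ => n ⟨s - 1, hj⟩) ⟨s - 1, hj⟩ := by
        apply Dep (s - 1) x n _ _ hj
        intro i hi
        have hlt := i.isLt
        have hie : i = ⟨s - 1, hj⟩ := Fin.ext (by simp; omega)
        rw [hie]
      rw [h1]
      show ψ x (fun _ => n ⟨s - 1, hj⟩) ⟨s - 1, hj⟩ =
        ψ (x + ((s - 1 : ℕ) : ZMod r) - ((s - 1 : ℕ) : ZMod r))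
          (fun _ => n ⟨s - 1, hj⟩) ⟨s - 1, by omega⟩
      rw [show x + ((s - 1 : ℕ) : ZMod r) - ((s - 1 : ℕ) : ZMod r) = x from by ring]
    | succ d ih =>
      intro j hj hd x n
      by_cases hz : s - 1 - d = 0
      · exact ih j hj (by omega) x n
      · have hj1s : j + 1 < s := by omega
        have e1 := star (x - 1) (untail s n) n (shOK_untail n) j hj1s
        rw [sub_add_cancel] at e1
        rw [show (⟨j, Nat.lt_of_succ_lt hj1s⟩ : Fin s) = ⟨j, hj⟩ from rfl] at e1
        rw [e1, ih (j + 1) hj1s (by omega) (x - 1) (untail s n)]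
        have h3 : untail s n ⟨j + 1, hj1s⟩ = n ⟨j, hj⟩ := by
          rw [untail_pos (⟨j + 1, hj1s⟩ : Fin s) (Nat.le_add_left 1 j)]
          exact congrArg n (Fin.ext (by simp))
        have h4 : (x - 1) + ((j + 1 : ℕ) : ZMod r) = x + (j : ZMod r) := by
          push_cast
          ring
        rw [h3, h4]
  have binj : ∀ y : ZMod r, ρ y 0 ≠ ρ y 1 := by
    intro y heq
    set x : ZMod r := y - ((s - 1 : ℕ) : ZMod r) with hx
    set n : Fin s → ZMod 2 := fun _ => 0 with hn
    set n' : Fin s → ZMod 2 := fun i => if i.val = s - 1 then 1 else 0 with hn2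
    have hpsi : ψ x n = ψ x n' := by
      funext i
      have hi1 := Elem (s - 1 - i.val) i.val i.isLt (by omega) x n
      have hi2 := Elem (s - 1 - i.val) i.val i.isLt (by omega) x n'
      rw [show (⟨i.val, i.isLt⟩ : Fin s) = i from Fin.ext rfl] at hi1 hi2
      rw [hi1, hi2]
      by_cases hc : i.val = s - 1
      · have hxy : x + ((i.val : ℕ) : ZMod r) = y := by
          rw [hx, hc]
          ring
        have hv1 : n i = 0 := rfl
        have hv2 : n' i = 1 := by
          rw [hn2]
          simp only [if_pos hc]
        rw [hv1, hv2, hxy, heq]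
      · have hv1 : n i = 0 := rfl
        have hv2 : n' i = 0 := by
          rw [hn2]
          simp only [if_neg hc]
        rw [hv1, hv2]
    have hinj : ((n, x, true) : SPXV r s) = (n', x, true) := by
      apply h.injective
      rw [hform, hform, hpsi]
    have hcf := congrArg (fun z : SPXV r s => z.1 ⟨s - 1, by omega⟩) hinj
    simp only [hn, hn2] at hcf
    simp at hcf
  set b : ZMod r → ZMod 2 := fun y => ρ y 0 with hb
  have hρval : ∀ (y : ZMod r) (t : ZMod 2), ρ y t = t + b y := by
    intro y t
    have ht : t = 0 ∨ t = 1 := by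
      have h2 : ∀ u : ZMod 2, u = 0 ∨ u = 1 := by decide
      exact h2 t
    rcases ht with ht | ht
    · rw [ht, zero_add]
    · rw [ht]
      have hcc : ∀ a c : ZMod 2, a ≠ c → c = 1 + a := by decide
      exact hcc _ _ (binj y)
  refine ⟨b, ?_⟩
  rintro ⟨n, x, ε⟩ i
  have hi1 := Elem (s - 1 - i.val) i.val i.isLt (by omega) x n
  rw [show (⟨i.val, i.isLt⟩ : Fin s) = i from Fin.ext rfl] at hi1
  cases ε
  · show (h (n, x, false)).1 i = _
    rw [hfalse]
    show ψ x n i = _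
    rw [hi1, hρval]
  · show (h (n, x, true)).1 i = _
    rw [hform]
    show ψ x n i = _
    rw [hi1, hρval]

/-- the rotation automorphism -/
def Rot (r s : ℕ) : Equiv.Perm (SPXV r s) where
  toFun v := (v.1, v.2.1 + 1, v.2.2)
  invFun v := (v.1, v.2.1 - 1, v.2.2)
  left_inv v := by
    show ((v.1, v.2.1 + 1 - 1, v.2.2) : SPXV r s) = v
    rw [show v.2.1 + 1 - 1 = v.2.1 from by ring]
  right_inv v := by
    show ((v.1, v.2.1 - 1 + 1, v.2.2) : SPXV r s) = v
    rw [show v.2.1 - 1 + 1 = v.2.1 from by ring]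

lemma rot_apply (v : SPXV r s) : Rot r s v = (v.1, v.2.1 + 1, v.2.2) := rfl

lemma rel_rot (a b : SPXV r s) : spxRel r s (Rot r s a) (Rot r s b) ↔ spxRel r s a b := by
  obtain ⟨n, x, ε⟩ := a
  obtain ⟨m, y, δ⟩ := b
  show spxRel r s (n, x + 1, ε) (m, y + 1, δ) ↔ spxRel r s (n, x, ε) (m, y, δ)
  unfold spxRel
  constructor
  · rintro ⟨h1, h2, ⟨h3, h4⟩ | ⟨h3, h4⟩⟩
    · exact ⟨h1, h2, Or.inl ⟨by linear_combination h3, h4⟩⟩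
    · exact ⟨h1, h2, Or.inr ⟨by linear_combination h3, h4⟩⟩
  · rintro ⟨h1, h2, ⟨h3, h4⟩ | ⟨h3, h4⟩⟩
    · exact ⟨h1, h2, Or.inl ⟨by linear_combination h3, h4⟩⟩
    · exact ⟨h1, h2, Or.inr ⟨by linear_combination h3, h4⟩⟩

lemma isAut_rot : IsAut (Rot r s) := by
  intro u v
  rw [adj_iff, adj_iff, rel_rot, rel_rot]

lemma isAut_mul {g h : Equiv.Perm (SPXV r s)} (hg : IsAut g) (hh : IsAut h) :
    IsAut (g * h) := by
  intro u v
  rw [Equiv.Perm.mul_apply, Equiv.Perm.mul_apply, hg, hh]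

lemma isAut_inv {g : Equiv.Perm (SPXV r s)} (hg : IsAut g) : IsAut g⁻¹ := by
  intro u v
  conv_rhs => rw [← g.apply_symm_apply u, ← g.apply_symm_apply v]
  exact (hg _ _).symm

lemma sum_shift [NeZero r] (hr : 5 ≤ r) (b : ZMod r → ZMod 2) (c : ZMod r) :
    ∑ t ∈ Finset.range r, b (c + (t : ZMod r)) = ∑ y : ZMod r, b y := by
  haveI : NeZero r := ⟨by omega⟩
  rw [← Fin.sum_univ_eq_sum_range (fun t => b (c + (t : ZMod r))) r]
  refine Fintype.sum_bijective (fun t : Fin r => c + ((t.val : ℕ) : ZMod r)) ⟨?_, ?_⟩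
    (fun t => b (c + ((t.val : ℕ) : ZMod r))) b (fun t => rfl)
  · intro a a' haa
    have h1 : ((a.val : ℕ) : ZMod r) = ((a'.val : ℕ) : ZMod r) := by
      have : c + ((a.val : ℕ) : ZMod r) = c + ((a'.val : ℕ) : ZMod r) := haa
      linear_combination this
    have h2 := congrArg ZMod.val h1
    rw [ZMod.val_cast_of_lt a.isLt, ZMod.val_cast_of_lt a'.isLt] at h2
    exact Fin.ext h2
  · intro y
    refine ⟨⟨(y - c).val, ZMod.val_lt _⟩, ?_⟩
    show c + (((y - c).val : ℕ) : ZMod r) = y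
    rw [ZMod.natCast_val, ZMod.cast_id]
    ring

lemma z2cases (t : ZMod 2) : t = 0 ∨ t = 1 := by revert t; decide

lemma z2add (a : ZMod 2) : a + 1 + 1 = a := by revert a; decide

lemma z2ne (a : ZMod 2) : a + 1 ≠ a := by revert a; decide

end Dev

theorem stmt5 (r s : ℕ) (hr : 5 ≤ r) (hs : 1 ≤ s) (hsr : s ≤ r - 1)
    (G : Subgroup (Equiv.Perm (SPXV r s)))
    (hAut : ∀ g ∈ G, ∀ u v, (SPX r s).Adj (g u) (g v) ↔ (SPX r s).Adj u v)
    (hTrans : ∀ u v : SPXV r s, ∃ g ∈ G, g u = v) :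
    ∃ g ∈ G,
      (∀ h ∈ Subgroup.zpowers g, ∀ v : SPXV r s, h v = v → h = 1) ∧
      r ≤ orderOf g ∧ (orderOf g = r ∨ orderOf g = 2 * r) := by
  haveI : NeZero r := ⟨by omega⟩
  obtain ⟨g, hgG, hgu⟩ :=
    hTrans ((fun _ => 0, 0, true) : SPXV r s) ((fun _ => 0, 1, true) : SPXV r s)
  have hAutg : IsAut g := hAut g hgG
  rcases typeI_or_II hr hs hAutg with ⟨c, hc⟩ | ⟨c, hc⟩
  swap
  · exfalso
    have h2 := (hc ((fun _ => 0, 0, true) : SPXV r s)).2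
    rw [hgu] at h2
    simp at h2
  have hc1 : c = 1 := by
    have h1 := (hc ((fun _ => 0, 0, true) : SPXV r s)).1
    rw [hgu] at h1
    have h1' : (1 : ZMod r) = 0 + c := h1
    linear_combination -h1'
  subst hc1
  have hg2 : ∀ v : SPXV r s, (g v).2.1 = v.2.1 + 1 := fun v => (hc v).1
  have hg3 : ∀ v : SPXV r s, (g v).2.2 = v.2.2 := fun v => (hc v).2
  set h : Equiv.Perm (SPXV r s) := g * (Rot r s)⁻¹ with hh
  have hAuth : IsAut h := isAut_mul hAutg (isAut_inv isAut_rot)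
  have hfix : ∀ v, (h v).2.1 = v.2.1 ∧ (h v).2.2 = v.2.2 := by
    intro v
    have hinv : (Rot r s)⁻¹ v = (v.1, v.2.1 - 1, v.2.2) := rfl
    constructor
    · show (g ((Rot r s)⁻¹ v)).2.1 = v.2.1
      rw [hinv, hg2]
      show v.2.1 - 1 + 1 = v.2.1
      ring
    · show (g ((Rot r s)⁻¹ v)).2.2 = v.2.2
      rw [hinv, hg3]
  obtain ⟨b, hbf⟩ := wreath hr hs hAuth hfix
  have hg1 : ∀ (v : SPXV r s) (i : Fin s),
      (g v).1 i = v.1 i + b (v.2.1 + 1 + (i.val : ZMod r)) := by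
    intro v i
    have hgv : g v = h (Rot r s v) := by
      show g v = (g * (Rot r s)⁻¹) (Rot r s v)
      rw [Equiv.Perm.mul_apply, Equiv.Perm.inv_def, Equiv.symm_apply_apply]
    rw [hgv]
    have := hbf (Rot r s v) i
    rw [rot_apply] at this
    exact this
  -- power formula
  have hpow : ∀ (k : ℕ) (v : SPXV r s),
      ((g ^ k) v).2.1 = v.2.1 + (k : ZMod r) ∧ ((g ^ k) v).2.2 = v.2.2 ∧
      ∀ i : Fin s, ((g ^ k) v).1 i =
        v.1 i + ∑ t ∈ Finset.range k, b (v.2.1 + 1 + (i.val : ZMod r) + (t : ZMod r)) := by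
    intro k
    induction k with
    | zero =>
      intro v
      refine ⟨by simp, by simp, ?_⟩
      intro i
      simp
    | succ k ih =>
      intro v
      have hstep : (g ^ (k + 1)) v = g ((g ^ k) v) := by
        rw [pow_succ' g k, Equiv.Perm.mul_apply]
      obtain ⟨h1, h2, h3⟩ := ih v
      refine ⟨?_, ?_, ?_⟩
      · rw [hstep, hg2, h1]
        push_cast
        ring
      · rw [hstep, hg3, h2]
      · intro i
        have harg : b ((v.2.1 + (k : ZMod r)) + 1 + (i.val : ZMod r)) =
            b (v.2.1 + 1 + (i.val : ZMod r) + (k : ZMod r)) := congrArg b (by ring)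
        rw [hstep, hg1, h3 i, h1, Finset.sum_range_succ, harg]
        ring
  set T : ZMod 2 := ∑ y : ZMod r, b y with hT
  have hgr : ∀ v : SPXV r s, ((g ^ r) v).2.1 = v.2.1 ∧ ((g ^ r) v).2.2 = v.2.2 ∧
      ∀ i : Fin s, ((g ^ r) v).1 i = v.1 i + T := by
    intro v
    obtain ⟨h1, h2, h3⟩ := hpow r v
    refine ⟨by rw [h1, ZMod.natCast_self, add_zero], h2, ?_⟩
    intro i
    rw [h3 i, sum_shift hr b (v.2.1 + 1 + (i.val : ZMod r))]
  have hne : ∀ k : ℕ, ¬ ((r : ℕ) ∣ k) → g ^ k ≠ 1 := by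
    intro k hk h1
    apply hk
    have h2 : ((g ^ k) ((fun _ => 0, 0, true) : SPXV r s)).2.1 =
        (((fun _ => 0, 0, true) : SPXV r s)).2.1 := by rw [h1]; rfl
    rw [(hpow k _).1] at h2
    have h3 : ((k : ℕ) : ZMod r) = 0 := by linear_combination h2
    exact (ZMod.natCast_eq_zero_iff k r).mp h3
  rcases z2cases T with hT0 | hT1
  · -- order r
    have hgr1 : g ^ r = 1 := by
      apply Equiv.ext
      intro v
      obtain ⟨h1, h2, h3⟩ := hgr v
      have hfst : ((g ^ r) v).1 = v.1 := funext fun i => by rw [h3 i, hT0, add_zero]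
      show (g ^ r) v = v
      rw [show ((g ^ r) v) = (((g ^ r) v).1, ((g ^ r) v).2.1, ((g ^ r) v).2.2) from rfl,
        h1, h2, hfst]
    have hord : orderOf g = r := by
      rw [orderOf_eq_iff (by omega)]
      refine ⟨hgr1, ?_⟩
      intro m hmr hm0
      exact hne m (fun hd => absurd (Nat.le_of_dvd hm0 hd) (by omega))
    refine ⟨g, hgG, ?_, by omega, Or.inl hord⟩
    intro h' hmem v hfixv
    rw [← mem_powers_iff_mem_zpowers] at hmem
    obtain ⟨k, hk⟩ := (Submonoid.mem_powers_iff h' g).mp hmem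
    have hdvd : (r : ℕ) ∣ k := by
      have h2 : ((g ^ k) v).2.1 = v.2.1 := by rw [hk, hfixv]
      rw [(hpow k v).1] at h2
      have h3 : ((k : ℕ) : ZMod r) = 0 := by linear_combination h2
      exact (ZMod.natCast_eq_zero_iff k r).mp h3
    obtain ⟨q, hq⟩ := hdvd
    rw [← hk, hq, pow_mul, hgr1, one_pow]
  · -- order 2r
    have hgrv : ∀ v : SPXV r s, (g ^ r) v = (fun i => v.1 i + 1, v.2.1, v.2.2) := by
      intro v
      obtain ⟨h1, h2, h3⟩ := hgr v
      have hfst : ((g ^ r) v).1 = fun i => v.1 i + 1 := funext fun i => by rw [h3 i, hT1]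
      rw [show ((g ^ r) v) = (((g ^ r) v).1, ((g ^ r) v).2.1, ((g ^ r) v).2.2) from rfl,
        h1, h2, hfst]
    have hgr2 : (g ^ r) * (g ^ r) = 1 := by
      apply Equiv.ext
      intro v
      rw [Equiv.Perm.mul_apply, hgrv, hgrv]
      show ((fun i => (v.1 i + 1) + 1, v.2.1, v.2.2) : SPXV r s) = v
      rw [show (fun i => (v.1 i + 1) + 1) = v.1 from funext fun i => z2add (v.1 i)]
    have hg2r : g ^ (2 * r) = 1 := by
      rw [show 2 * r = r * 2 from by ring, pow_mul, sq, hgr2]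
    have hgrne : g ^ r ≠ 1 := by
      intro h1
      have h2 : ((g ^ r) ((fun _ => 0, 0, true) : SPXV r s)).1 ⟨0, hs⟩ =
          (((fun _ => 0, 0, true) : SPXV r s)).1 ⟨0, hs⟩ := by rw [h1]; rfl
      rw [hgrv] at h2
      exact absurd (show (0 : ZMod 2) + 1 = 0 from h2) (by decide)
    have hord : orderOf g = 2 * r := by
      rw [orderOf_eq_iff (by omega)]
      refine ⟨hg2r, ?_⟩
      intro m hm2r hm0
      by_cases hd : (r : ℕ) ∣ m
      · obtain ⟨q, hq⟩ := hd
        have hq1 : q = 1 := by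
          rcases Nat.lt_or_ge q 1 with hq2 | hq2
          · exfalso
            have : q = 0 := by omega
            rw [this, mul_zero] at hq
            omega
          · rcases Nat.lt_or_ge q 2 with hq3 | hq3
            · omega
            · exfalso
              have h5 : r * 2 ≤ r * q := Nat.mul_le_mul_left r hq3
              omega
        rw [hq, hq1, mul_one]
        exact hgrne
      · exact hne m hd
    refine ⟨g, hgG, ?_, by omega, Or.inr hord⟩
    intro h' hmem v hfixv
    rw [← mem_powers_iff_mem_zpowers] at hmem
    obtain ⟨k, hk⟩ := (Submonoid.mem_powers_iff h' g).mp hmem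
    have hdvd : (r : ℕ) ∣ k := by
      have h2 : ((g ^ k) v).2.1 = v.2.1 := by rw [hk, hfixv]
      rw [(hpow k v).1] at h2
      have h3 : ((k : ℕ) : ZMod r) = 0 := by linear_combination h2
      exact (ZMod.natCast_eq_zero_iff k r).mp h3
    obtain ⟨q, hq⟩ := hdvd
    rcases Nat.even_or_odd q with ⟨t, ht⟩ | ⟨t, ht⟩
    · rw [← hk, hq, ht, show r * (t + t) = (2 * r) * t from by ring, pow_mul, hg2r, one_pow]
    · exfalso
      have hkr : g ^ k = g ^ r := by
        rw [hq, ht, show r * (2 * t + 1) = (2 * r) * t + r from by ring, pow_add, pow_mul,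
          hg2r, one_pow, one_mul]
      have h2 : (g ^ r) v = v := by rw [← hkr, hk]; exact hfixv
      rw [hgrv] at h2
      have h3 := congrArg (fun w : SPXV r s => w.1 ⟨0, hs⟩) h2
      exact z2ne (v.1 ⟨0, hs⟩) h3
  done

end Stmt5
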